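/- Let z > 2 be real. Let S be the subsemigroup of M_2(𝕋_{[1,z]}) consisting of all matrices of the form [[0, a],[-∞, b]] with a, b ∈ 𝕋_{[1,z]}, and S' the subsemigroup of all matrices of the form [[0, -∞],[a, b]] with a, b ∈ 𝕋_{[1,z]}. Then S and S' are both (2⌈z⌉+5)-permutable. -/

import Mathlib

set_option maxHeartbeats 1000000

universe u

/-! ### Semiring classes.

A *semiring* here is a nonempty set with an associative commutative addition and an
associative multiplication which distributes over addition on both sides; no zero or
identity element is assumed. -/

class PlainSemiring (S : Type u) extends Add S, Mul S where
  nonempty' : Nonempty S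
  add_assoc' : ∀ a b c : S, a + b + c = a + (b + c)
  add_comm' : ∀ a b : S, a + b = b + a
  mul_assoc' : ∀ a b c : S, a * b * c = a * (b * c)
  left_distrib' : ∀ a b c : S, a * (b + c) = a * b + a * c
  right_distrib' : ∀ a b c : S, (a + b) * c = a * c + b * c

/-- A bipotent semiring: `x + y` is always either `x` or `y`.
(The induced total order is given by `x ≤ y ↔ x + y = y`.) -/
class BipotentSemiring (S : Type u) extends PlainSemiring S where
  bipotent : ∀ a b : S, a + b = a ∨ a + b = b

/-- A commutative bipotent semiring. -/
class CommBipotentSemiring (S : Type u) extends BipotentSemiring S where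
  mul_comm' : ∀ a b : S, a * b = b * a

/-- `mpow a n` is the `(n+1)`-st power of `a`, so the set of positive powers of `a`
is exactly `Set.range (mpow a)`, and the multiplicative order of `a` is the
cardinality of `Set.range (mpow a)`. -/
def mpow {S : Type*} [Mul S] (a : S) : ℕ → S
  | 0 => a
  | n + 1 => mpow a n * a

lemma mpow_mul_mpow {S : Type*} [PlainSemiring S] (a : S) (m n : ℕ) :
    mpow a m * mpow a n = mpow a (m + n + 1) := by
  induction n with
  | zero => rfl
  | succ n ih =>
    show mpow a m * (mpow a n * a) = mpow a (m + n + 1) * a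
    rw [← PlainSemiring.mul_assoc', ih]

/-! ### Products of finite families, and permutability. -/

/-- Fold step used to define sums/products of possibly empty families in a structure
with no neutral element; the overall fold is `none` iff the family is empty. -/
def optStep {S : Type*} (op : S → S → S) : Option S → S → Option S :=
  fun acc x => some (acc.elim x (fun a => op a x))

/-- The sum `s 0 + s 1 + ⋯` of a finite family, as an `Option` (`none` iff `k = 0`). -/
def finSum {S : Type*} [Add S] {k : ℕ} (s : Fin k → S) : Option S :=
  (List.ofFn s).foldl (optStep (· + ·)) none

/-- The product `s 0 * s 1 * ⋯` of a finite family, as an `Option` (`none` iff `k = 0`). -/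
def finProd {S : Type*} [Mul S] {k : ℕ} (s : Fin k → S) : Option S :=
  (List.ofFn s).foldl (optStep (· * ·)) none

/-- A multiplicative structure is `k`-permutable if every product of `k` elements is
preserved by some non-identity permutation of its factors. -/
def KPermutable (S : Type*) [Mul S] (k : ℕ) : Prop :=
  ∀ s : Fin k → S, ∃ σ : Equiv.Perm (Fin k), σ ≠ Equiv.refl (Fin k) ∧
    finProd (fun i => s (σ i)) = finProd s

/-- A semigroup is strongly permutable if it is `k`-permutable for some `k ≥ 2`. -/
def StronglyPermutable (S : Type*) [Mul S] : Prop :=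
  ∃ k : ℕ, 2 ≤ k ∧ KPermutable S k

/-- A semigroup is weakly permutable if for some `k ≥ 2`, any product of `k` elements
is computed identically by two distinct permutations of its factors. -/
def WeaklyPermutable (S : Type*) [Mul S] : Prop :=
  ∃ k : ℕ, 2 ≤ k ∧ ∀ s : Fin k → S, ∃ σ τ : Equiv.Perm (Fin k), σ ≠ τ ∧
    finProd (fun i => s (σ i)) = finProd (fun i => s (τ i))

/-- Isomorphism of semirings (bijection preserving addition and multiplication). -/
def RingLikeIso (S T : Type*) [Add S] [Mul S] [Add T] [Mul T] : Prop :=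
  ∃ f : S → T, Function.Bijective f ∧ (∀ a b : S, f (a + b) = f a + f b) ∧
    (∀ a b : S, f (a * b) = f a * f b)

/-! ### Matrices. -/

/-- Square `n × n` matrices over `S`. -/
def MatSR (S : Type u) (n : ℕ) : Type u := Fin n → Fin n → S

/-- Matrix multiplication, `(A*B) i j = Σ_k (A i k * B k j)`.  (For `n ≥ 1` — the only
case of interest — the `getD` default value is never used.) -/
def matMul {S : Type*} [Add S] [Mul S] {n : ℕ} (A B : MatSR S n) : MatSR S n :=
  fun i j => (finSum (fun k : Fin n => A i k * B k j)).getD (A i j * B i j)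

/-- The multiplicative semigroup `M_n(S)`. -/
instance {S : Type*} [Add S] [Mul S] {n : ℕ} : Mul (MatSR S n) := ⟨matMul⟩

/-! ### `S⁰`: adjoining a zero, and upper triangular matrices. -/

/-- `S` with a zero (additively neutral, multiplicatively absorbing) element adjoined. -/
inductive Adj0 (S : Type u) : Type u
  | zero : Adj0 S
  | elem : S → Adj0 S

namespace Adj0

def add' {S : Type*} [Add S] : Adj0 S → Adj0 S → Adj0 S
  | .zero, b => b
  | .elem a, .zero => .elem a
  | .elem a, .elem b => .elem (a + b)

def mul' {S : Type*} [Mul S] : Adj0 S → Adj0 S → Adj0 S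
  | .zero, _ => .zero
  | .elem _, .zero => .zero
  | .elem a, .elem b => .elem (a * b)

instance {S : Type*} [Add S] : Add (Adj0 S) := ⟨add'⟩
instance {S : Type*} [Mul S] : Mul (Adj0 S) := ⟨mul'⟩

@[simp] lemma zero_add {S : Type*} [Add S] (b : Adj0 S) : (zero : Adj0 S) + b = b := rfl
@[simp] lemma add_zero {S : Type*} [Add S] (a : Adj0 S) : a + (zero : Adj0 S) = a := by
  cases a <;> rfl
@[simp] lemma elem_add_elem {S : Type*} [Add S] (a b : S) :
    (elem a : Adj0 S) + elem b = elem (a + b) := rfl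
@[simp] lemma zero_mul {S : Type*} [Mul S] (b : Adj0 S) : (zero : Adj0 S) * b = zero := rfl
@[simp] lemma mul_zero {S : Type*} [Mul S] (a : Adj0 S) : a * (zero : Adj0 S) = zero := by
  cases a <;> rfl
@[simp] lemma elem_mul_elem {S : Type*} [Mul S] (a b : S) :
    (elem a : Adj0 S) * elem b = elem (a * b) := rfl

lemma add_eq_zero_iff {S : Type*} [Add S] (a b : Adj0 S) :
    a + b = zero ↔ a = zero ∧ b = zero := by
  cases a <;> cases b <;> simp

end Adj0

lemma foldl_optStep_adj0 {S : Type*} [Add S] (l : List (Adj0 S)) (a : Adj0 S) :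
    ∃ c : Adj0 S, l.foldl (optStep (· + ·)) (some a) = some c ∧
      (c = Adj0.zero ↔ a = Adj0.zero ∧ ∀ x ∈ l, x = Adj0.zero) := by
  induction l generalizing a with
  | nil => exact ⟨a, rfl, by simp⟩
  | cons x l ih =>
    obtain ⟨c, hc, hiff⟩ := ih (a + x)
    refine ⟨c, ?_, ?_⟩
    · simpa [optStep] using hc
    · rw [hiff, Adj0.add_eq_zero_iff]
      simp only [List.mem_cons, forall_eq_or_imp]
      tauto

lemma finSum_adj0_eq_zero {S : Type*} [Add S] {n : ℕ} (f : Fin n → Adj0 S) (i : Fin n)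
    (d : Adj0 S) (h : ∀ k, f k = Adj0.zero) : (finSum f).getD d = Adj0.zero := by
  cases n with
  | zero => exact i.elim0
  | succ m =>
    rw [finSum, List.ofFn_succ, List.foldl_cons]
    obtain ⟨c, hc, hiff⟩ := foldl_optStep_adj0 (List.ofFn fun i : Fin m => f i.succ) (f 0)
    rw [show optStep (· + ·) none (f 0) = some (f 0) from rfl, hc]
    have : c = Adj0.zero := hiff.mpr ⟨h 0, by
      intro x hx
      rw [List.mem_ofFn] at hx
      obtain ⟨j, rfl⟩ := hx
      exact h _⟩
    simp [this]

lemma finSum_adj0_ne_zero {S : Type*} [Add S] {n : ℕ} (f : Fin n → Adj0 S) (i : Fin n)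
    (d : Adj0 S) (h : f i ≠ Adj0.zero) : (finSum f).getD d ≠ Adj0.zero := by
  cases n with
  | zero => exact i.elim0
  | succ m =>
    rw [finSum, List.ofFn_succ, List.foldl_cons]
    obtain ⟨c, hc, hiff⟩ := foldl_optStep_adj0 (List.ofFn fun i : Fin m => f i.succ) (f 0)
    rw [show optStep (· + ·) none (f 0) = some (f 0) from rfl, hc]
    simp only [Option.getD_some]
    intro hcz
    obtain ⟨h0, hall⟩ := hiff.mp hcz
    induction i using Fin.cases with
    | zero => exact h h0
    | succ j => exact h (hall _ (List.mem_ofFn.mpr ⟨j, rfl⟩))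

/-- Upper-triangularity over `S⁰`: entries strictly below the diagonal are the
adjoined zero; entries on and above the diagonal lie in `S`. -/
def IsUT {S : Type*} {n : ℕ} (A : MatSR (Adj0 S) n) : Prop :=
  (∀ i j : Fin n, (j : ℕ) < (i : ℕ) → A i j = Adj0.zero) ∧
  (∀ i j : Fin n, (i : ℕ) ≤ (j : ℕ) → ∃ s : S, A i j = Adj0.elem s)

lemma IsUT.mul {S : Type*} [Add S] [Mul S] {n : ℕ} {A B : MatSR (Adj0 S) n}
    (hA : IsUT A) (hB : IsUT B) : IsUT (matMul A B) := by
  constructor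
  · intro i j hji
    apply finSum_adj0_eq_zero _ i
    intro k
    rcases le_or_gt (i : ℕ) (k : ℕ) with h | h
    · rw [hB.1 k j (lt_of_lt_of_le hji h), Adj0.mul_zero]
    · rw [hA.1 i k h, Adj0.zero_mul]
  · intro i j hij
    have hne : matMul A B i j ≠ Adj0.zero := by
      apply finSum_adj0_ne_zero _ i
      obtain ⟨s, hs⟩ := hA.2 i i le_rfl
      obtain ⟨t, ht⟩ := hB.2 i j hij
      rw [hs, ht, Adj0.elem_mul_elem]
      simp
    cases hc : matMul A B i j with
    | zero => exact absurd hc hne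
    | elem s => exact ⟨s, rfl⟩

/-- The multiplicative semigroup `UT_n(S)` of upper triangular matrices over `S⁰`. -/
def UTMat (S : Type u) (n : ℕ) : Type u := {A : MatSR (Adj0 S) n // IsUT A}

instance {S : Type*} [Add S] [Mul S] {n : ℕ} : Mul (UTMat S n) :=
  ⟨fun A B => ⟨matMul A.1 B.1, A.2.mul B.2⟩⟩

/-! ### `S^{01}`: adjoining a zero and an identity, and unitriangular matrices. -/

/-- `S` with a zero and a multiplicative identity adjoined (`S^{01}` in the paper).
The sum of `one` and an `elem` is left undefined in the paper; it is given an
arbitrary value here, and never arises in products of unitriangular matrices. -/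
inductive Adj01 (S : Type u) : Type u
  | zero : Adj01 S
  | one : Adj01 S
  | elem : S → Adj01 S

namespace Adj01

def add' {S : Type*} [Add S] : Adj01 S → Adj01 S → Adj01 S
  | .zero, b => b
  | a, .zero => a
  | .one, .one => .one
  | .one, .elem b => .elem b
  | .elem a, .one => .elem a
  | .elem a, .elem b => .elem (a + b)

def mul' {S : Type*} [Mul S] : Adj01 S → Adj01 S → Adj01 S
  | .zero, _ => .zero
  | _, .zero => .zero
  | .one, b => b
  | a, .one => a
  | .elem a, .elem b => .elem (a * b)

instance {S : Type*} [Add S] : Add (Adj01 S) := ⟨add'⟩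
instance {S : Type*} [Mul S] : Mul (Adj01 S) := ⟨mul'⟩

@[simp] lemma zero_add {S : Type*} [Add S] (b : Adj01 S) : (zero : Adj01 S) + b = b := by
  cases b <;> rfl
@[simp] lemma add_zero {S : Type*} [Add S] (a : Adj01 S) : a + (zero : Adj01 S) = a := by
  cases a <;> rfl
@[simp] lemma one_add_one {S : Type*} [Add S] : (one : Adj01 S) + one = one := rfl
@[simp] lemma elem_add_elem {S : Type*} [Add S] (a b : S) :
    (elem a : Adj01 S) + elem b = elem (a + b) := rfl
@[simp] lemma one_add_elem {S : Type*} [Add S] (b : S) :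
    (one : Adj01 S) + elem b = elem b := rfl
@[simp] lemma elem_add_one {S : Type*} [Add S] (a : S) :
    (elem a : Adj01 S) + one = elem a := rfl
@[simp] lemma zero_mul {S : Type*} [Mul S] (b : Adj01 S) : (zero : Adj01 S) * b = zero := by
  cases b <;> rfl
@[simp] lemma mul_zero {S : Type*} [Mul S] (a : Adj01 S) : a * (zero : Adj01 S) = zero := by
  cases a <;> rfl
@[simp] lemma one_mul {S : Type*} [Mul S] (b : Adj01 S) : (one : Adj01 S) * b = b := by
  cases b <;> rfl
@[simp] lemma mul_one {S : Type*} [Mul S] (a : Adj01 S) : a * (one : Adj01 S) = a := by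
  cases a <;> rfl
@[simp] lemma elem_mul_elem {S : Type*} [Mul S] (a b : S) :
    (elem a : Adj01 S) * elem b = elem (a * b) := rfl

lemma mul_ne_one {S : Type*} [Mul S] {a b : Adj01 S} (ha : a ≠ one) (hb : b ≠ one) :
    a * b ≠ one := by
  cases a <;> cases b <;> simp_all

lemma add_ne_one {S : Type*} [Add S] {a b : Adj01 S} (ha : a ≠ one) (hb : b ≠ one) :
    a + b ≠ one := by
  cases a <;> cases b <;> simp_all

lemma add_01 {S : Type*} [Add S] {a b : Adj01 S} (ha : a = zero ∨ a = one)
    (hb : b = zero ∨ b = one) :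
    (a + b = zero ∨ a + b = one) ∧ (a + b = one ↔ a = one ∨ b = one) := by
  rcases ha with rfl | rfl <;> rcases hb with rfl | rfl <;> simp

end Adj01

lemma foldl_optStep_adj01 {S : Type*} [Add S] (l : List (Adj01 S)) (a : Adj01 S)
    (ha : a = Adj01.zero ∨ a = Adj01.one) (hl : ∀ x ∈ l, x = Adj01.zero ∨ x = Adj01.one) :
    ∃ c : Adj01 S, l.foldl (optStep (· + ·)) (some a) = some c ∧
      (c = Adj01.zero ∨ c = Adj01.one) ∧
      (c = Adj01.one ↔ a = Adj01.one ∨ ∃ x ∈ l, x = Adj01.one) := by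
  induction l generalizing a with
  | nil => exact ⟨a, rfl, ha, by simp⟩
  | cons x l ih =>
    have hx := hl x (by simp)
    have key := Adj01.add_01 ha hx
    obtain ⟨c, hc, hc01, hiff⟩ := ih (a + x) key.1 (fun y hy => hl y (by simp [hy]))
    refine ⟨c, by simpa [optStep] using hc, hc01, ?_⟩
    rw [hiff, key.2]
    simp only [List.mem_cons, exists_eq_or_imp]
    tauto

lemma foldl_optStep_adj01_ne_one {S : Type*} [Add S] (l : List (Adj01 S)) (a : Adj01 S)
    (ha : a ≠ Adj01.one) (hl : ∀ x ∈ l, x ≠ Adj01.one) :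
    ∃ c : Adj01 S, l.foldl (optStep (· + ·)) (some a) = some c ∧ c ≠ Adj01.one := by
  induction l generalizing a with
  | nil => exact ⟨a, rfl, ha⟩
  | cons x l ih =>
    have hax : a + x ≠ Adj01.one := Adj01.add_ne_one ha (hl x (by simp))
    obtain ⟨c, hc, hcne⟩ := ih (a + x) hax (fun y hy => hl y (by simp [hy]))
    exact ⟨c, by simpa [optStep] using hc, hcne⟩

lemma finSum_adj01_eq_one {S : Type*} [Add S] {n : ℕ} (f : Fin n → Adj01 S) (i : Fin n)
    (d : Adj01 S) (h01 : ∀ k, f k = Adj01.zero ∨ f k = Adj01.one) (hi : f i = Adj01.one) :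
    (finSum f).getD d = Adj01.one := by
  cases n with
  | zero => exact i.elim0
  | succ m =>
    rw [finSum, List.ofFn_succ, List.foldl_cons]
    obtain ⟨c, hc, _, hiff⟩ := foldl_optStep_adj01 (List.ofFn fun i : Fin m => f i.succ) (f 0)
      (h01 0) (by
        intro x hx
        rw [List.mem_ofFn] at hx
        obtain ⟨j, rfl⟩ := hx
        exact h01 _)
    rw [show optStep (· + ·) none (f 0) = some (f 0) from rfl, hc]
    simp only [Option.getD_some]
    apply hiff.mpr
    induction i using Fin.cases with
    | zero => exact Or.inl hi
    | succ j => exact Or.inr ⟨f j.succ, List.mem_ofFn.mpr ⟨j, rfl⟩, hi⟩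

lemma finSum_adj01_eq_zero {S : Type*} [Add S] {n : ℕ} (f : Fin n → Adj01 S) (i : Fin n)
    (d : Adj01 S) (h : ∀ k, f k = Adj01.zero) : (finSum f).getD d = Adj01.zero := by
  cases n with
  | zero => exact i.elim0
  | succ m =>
    rw [finSum, List.ofFn_succ, List.foldl_cons]
    obtain ⟨c, hc, hc01, hiff⟩ := foldl_optStep_adj01 (List.ofFn fun i : Fin m => f i.succ)
      (f 0) (Or.inl (h 0)) (by
        intro x hx
        rw [List.mem_ofFn] at hx
        obtain ⟨j, rfl⟩ := hx
        exact Or.inl (h _))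
    rw [show optStep (· + ·) none (f 0) = some (f 0) from rfl, hc]
    simp only [Option.getD_some]
    rcases hc01 with h' | h'
    · exact h'
    · exfalso
      rcases hiff.mp h' with h'' | ⟨x, hx, hx1⟩
      · rw [h 0] at h''; cases h''
      · rw [List.mem_ofFn] at hx
        obtain ⟨j, rfl⟩ := hx
        rw [h _] at hx1; cases hx1

lemma finSum_adj01_ne_one {S : Type*} [Add S] {n : ℕ} (f : Fin n → Adj01 S) (i : Fin n)
    (d : Adj01 S) (h : ∀ k, f k ≠ Adj01.one) : (finSum f).getD d ≠ Adj01.one := by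
  cases n with
  | zero => exact i.elim0
  | succ m =>
    rw [finSum, List.ofFn_succ, List.foldl_cons]
    obtain ⟨c, hc, hcne⟩ := foldl_optStep_adj01_ne_one (List.ofFn fun i : Fin m => f i.succ)
      (f 0) (h 0) (by
        intro x hx
        rw [List.mem_ofFn] at hx
        obtain ⟨j, rfl⟩ := hx
        exact h _)
    rw [show optStep (· + ·) none (f 0) = some (f 0) from rfl, hc]
    simpa using hcne

/-- Unitriangularity over `S^{01}`: the adjoined zero strictly below the diagonal, the
adjoined identity on the diagonal, and entries of `S⁰` (i.e. anything except the
adjoined identity) strictly above the diagonal. -/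
def IsU {S : Type*} {n : ℕ} (A : MatSR (Adj01 S) n) : Prop :=
  (∀ i j : Fin n, (j : ℕ) < (i : ℕ) → A i j = Adj01.zero) ∧
  (∀ i : Fin n, A i i = Adj01.one) ∧
  (∀ i j : Fin n, (i : ℕ) < (j : ℕ) → A i j ≠ Adj01.one)

lemma IsU.mul {S : Type*} [Add S] [Mul S] {n : ℕ} {A B : MatSR (Adj01 S) n}
    (hA : IsU A) (hB : IsU B) : IsU (matMul A B) := by
  refine ⟨?_, ?_, ?_⟩
  · intro i j hji
    apply finSum_adj01_eq_zero _ i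
    intro k
    rcases le_or_gt (i : ℕ) (k : ℕ) with h | h
    · rw [hB.1 k j (lt_of_lt_of_le hji h), Adj01.mul_zero]
    · rw [hA.1 i k h, Adj01.zero_mul]
  · intro i
    apply finSum_adj01_eq_one _ i
    · intro k
      rcases lt_trichotomy (k : ℕ) (i : ℕ) with h | h | h
      · rw [hA.1 i k h, Adj01.zero_mul]; exact Or.inl rfl
      · have : k = i := Fin.ext h
        subst this
        rw [hA.2.1 k, hB.2.1 k, Adj01.one_mul]; exact Or.inr rfl
      · rw [hB.1 k i h, Adj01.mul_zero]; exact Or.inl rfl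
    · rw [hA.2.1 i, hB.2.1 i, Adj01.one_mul]
  · intro i j hij
    apply finSum_adj01_ne_one _ i
    intro k
    rcases lt_trichotomy (k : ℕ) (i : ℕ) with h | h | h
    · rw [hA.1 i k h, Adj01.zero_mul]; exact fun h => by cases h
    · have : k = i := Fin.ext h
      subst this
      rw [hA.2.1 k, Adj01.one_mul]
      exact hB.2.2 k j (by omega)
    · rcases lt_trichotomy (k : ℕ) (j : ℕ) with h' | h' | h'
      · exact Adj01.mul_ne_one (hA.2.2 i k h) (hB.2.2 k j h')
      · have : k = j := Fin.ext h'
        subst this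
        rw [hB.2.1 k, Adj01.mul_one]
        exact hA.2.2 i k h
      · rw [hB.1 k j h', Adj01.mul_zero]; exact fun h => by cases h

/-- The multiplicative monoid `U_n(S)` of unitriangular matrices over `S^{01}`. -/
def UMat (S : Type u) (n : ℕ) : Type u := {A : MatSR (Adj01 S) n // IsU A}

instance {S : Type*} [Add S] [Mul S] {n : ℕ} : Mul (UMat S n) :=
  ⟨fun A B => ⟨matMul A.1 B.1, A.2.mul B.2⟩⟩

/-! ### Monogenic subsemirings. -/

/-- The carrier of the monogenic subsemiring `⟨a⟩` generated by `a` is the set of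
positive powers of `a`; in a bipotent semiring it is closed under addition. -/
instance genAdd {S : Type*} [BipotentSemiring S] (a : S) : Add ↥(Set.range (mpow a)) :=
  ⟨fun p q => ⟨p.1 + q.1, by
    rcases BipotentSemiring.bipotent p.1 q.1 with h | h <;> rw [h]
    exacts [p.2, q.2]⟩⟩

instance genMul {S : Type*} [BipotentSemiring S] (a : S) : Mul ↥(Set.range (mpow a)) :=
  ⟨fun p q => ⟨p.1 * q.1, by
    obtain ⟨m, hm⟩ := p.2
    obtain ⟨n, hn⟩ := q.2
    exact ⟨m + n + 1, by rw [← hm, ← hn, mpow_mul_mpow]⟩⟩⟩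

/-! ### Concrete bipotent semirings. -/

/-- The tropical semiring `ℕ_max` of positive natural numbers: addition is `max`,
multiplication is ordinary addition. -/
def NMax : Type := {n : ℕ // 0 < n}

instance : Add NMax := ⟨fun a b => ⟨max a.1 b.1, by have := a.2; have := b.2; omega⟩⟩
instance : Mul NMax := ⟨fun a b => ⟨a.1 + b.1, by have := a.2; have := b.2; omega⟩⟩

/-- The tropical semiring `(-ℕ)_max` of negative integers: addition is `max`,
multiplication is ordinary addition. -/
def NegNMax : Type := {z : ℤ // z < 0}

instance : Add NegNMax := ⟨fun a b => ⟨max a.1 b.1, by have := a.2; have := b.2; omega⟩⟩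
instance : Mul NegNMax := ⟨fun a b => ⟨a.1 + b.1, by have := a.2; have := b.2; omega⟩⟩

/-- The truncated tropical semiring `[k]_max` on `{1,…,k}`: addition is `max`,
multiplication is `a·b = min (a+b) k`. -/
def KMax (k : ℕ) : Type := {n : ℕ // 0 < n ∧ n ≤ k}

instance {k : ℕ} : Add (KMax k) :=
  ⟨fun a b => ⟨max a.1 b.1, by have := a.2; have := b.2; omega⟩⟩
instance {k : ℕ} : Mul (KMax k) :=
  ⟨fun a b => ⟨min (a.1 + b.1) k, by have := a.2; have := b.2; omega⟩⟩

/-- The truncated tropical semiring `[-k]_max` on `{-k,…,-1}`: addition is `max`,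
multiplication is `a·b = max (a+b) (-k)`. -/
def NegKMax (k : ℕ) : Type := {z : ℤ // -(k : ℤ) ≤ z ∧ z ≤ -1}

instance {k : ℕ} : Add (NegKMax k) :=
  ⟨fun a b => ⟨max a.1 b.1, by have := a.2; have := b.2; omega⟩⟩
instance {k : ℕ} : Mul (NegKMax k) :=
  ⟨fun a b => ⟨max (a.1 + b.1) (-(k : ℤ)), by have := a.2; have := b.2; omega⟩⟩

/-- The two-element boolean semifield `𝔹`: `{0,1}` with `0 < 1`, addition `max` (= "or")
and the usual multiplication (= "and"). -/
def BoolSR : Type := Bool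

instance : Add BoolSR := ⟨fun a b => (Bool.or a b : Bool)⟩
instance : Mul BoolSR := ⟨fun a b => (Bool.and a b : Bool)⟩

/-- A chain semiring: a linearly ordered set with addition `max` and multiplication `min`. -/
def ChainSR (L : Type u) [LinearOrder L] : Type u := L

instance {L : Type u} [LinearOrder L] : Add (ChainSR L) := ⟨fun a b => (max a b : L)⟩
instance {L : Type u} [LinearOrder L] : Mul (ChainSR L) := ⟨fun a b => (min a b : L)⟩

/-- The three-element commutative bipotent semiring of Proposition 1: order `A < B < C`
(addition is `max`), every element multiplicatively idempotent, and all products of two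
distinct elements equal to `B`. -/
inductive Three : Type
  | A : Three
  | B : Three
  | C : Three
deriving DecidableEq

instance : Fintype Three := ⟨{Three.A, Three.B, Three.C}, fun x => by cases x <;> simp⟩

def Three.add' : Three → Three → Three
  | .A, y => y
  | x, .A => x
  | .B, y => y
  | x, .B => x
  | .C, .C => .C

def Three.mul' : Three → Three → Three
  | .A, .A => .A
  | .B, .B => .B
  | .C, .C => .C
  | _, _ => .B

instance : Add Three := ⟨Three.add'⟩
instance : Mul Three := ⟨Three.mul'⟩

instance : CommBipotentSemiring Three where
  nonempty' := ⟨Three.A⟩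
  add_assoc' := by decide
  add_comm' := by decide
  mul_assoc' := by decide
  left_distrib' := by decide
  right_distrib' := by decide
  bipotent := by decide
  mul_comm' := by decide

/-- A bundled (possibly zero-less and identity-less) semiring, used to quantify over
semirings inside hypotheses. -/
structure BundledSemiring : Type 1 where
  carrier : Type
  add : carrier → carrier → carrier
  mul : carrier → carrier → carrier
  nonempty' : Nonempty carrier
  add_assoc' : ∀ a b c, add (add a b) c = add a (add b c)
  add_comm' : ∀ a b, add a b = add b a
  mul_assoc' : ∀ a b c, mul (mul a b) c = mul a (mul b c)
  left_distrib' : ∀ a b c, mul a (add b c) = add (mul a b) (mul a c)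
  right_distrib' : ∀ a b c, mul (add a b) c = add (mul a c) (mul b c)

/-! ### Semifields. -/

/-- `z` is a zero element: additively neutral and multiplicatively absorbing. -/
def IsZeroElem {S : Type*} [Add S] [Mul S] (z : S) : Prop :=
  ∀ x : S, z + x = x ∧ x + z = x ∧ z * x = z ∧ x * z = z

/-- `S` is a semifield: a commutative semiring, possibly without zero, whose set of
non-zero elements forms a group under multiplication (with identity `e`). -/
def IsSemifield (S : Type*) [Add S] [Mul S] : Prop :=
  ∃ e : S, ¬ IsZeroElem e ∧
    (∀ x : S, ¬ IsZeroElem x → e * x = x ∧ x * e = x) ∧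
    (∀ x y : S, ¬ IsZeroElem x → ¬ IsZeroElem y → ¬ IsZeroElem (x * y)) ∧
    (∀ x : S, ¬ IsZeroElem x → ∃ y : S, ¬ IsZeroElem y ∧ x * y = e ∧ y * x = e)

/-! ### Truncated tropical semirings. -/

/-- The underlying set `[x,y] ∪ {0}` of the truncated tropical semiring `𝕋_{[x,y]}`
(without the zero element `-∞`), for `0 ≤ x`.  Addition is `max`; multiplication is
`y`-truncated addition `a ⊗ b = min (a+b) y`, with the element `0` acting as the
multiplicative identity. -/
def TTb (x y : ℝ) (_hx : 0 ≤ x) : Type := {r : ℝ // r = 0 ∨ (x ≤ r ∧ r ≤ y)}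

namespace TTb

protected def add {x y : ℝ} {hx : 0 ≤ x} (a b : TTb x y hx) : TTb x y hx :=
  ⟨max a.1 b.1, by rcases max_choice a.1 b.1 with h | h <;> rw [h]
                   exacts [a.2, b.2]⟩

protected noncomputable def mul {x y : ℝ} {hx : 0 ≤ x} (a b : TTb x y hx) : TTb x y hx :=
  if ha : a.1 = 0 then b else if hb : b.1 = 0 then a else
    ⟨min (a.1 + b.1) y, by
      rcases a.2 with h | h
      · exact absurd h ha
      rcases b.2 with h' | h'
      · exact absurd h' hb
      right
      exact ⟨le_min (by linarith [h.1, h'.1]) (by linarith [h.1, h.2]), min_le_right _ _⟩⟩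

instance {x y : ℝ} {hx : 0 ≤ x} : Add (TTb x y hx) := ⟨TTb.add⟩
noncomputable instance {x y : ℝ} {hx : 0 ≤ x} : Mul (TTb x y hx) := ⟨TTb.mul⟩

end TTb

/-- The truncated tropical semiring `𝕋_{[x,y]}` (for `0 ≤ x < y`): the real interval
`[x,y]` together with a multiplicative identity `0` and a zero `-∞`, with addition
`max` and multiplication the `y`-truncated addition `a ⊗ b = min (a+b) y`. -/
abbrev TT (x y : ℝ) (hx : 0 ≤ x) : Type := Adj0 (TTb x y hx)

/-- The multiplicative identity `0` of `𝕋_{[x,y]}`. -/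
noncomputable def ttId (x y : ℝ) (hx : 0 ≤ x) : TT x y hx := Adj0.elem ⟨0, Or.inl rfl⟩

lemma ttId_mul {x y : ℝ} {hx : 0 ≤ x} (b : TT x y hx) : ttId x y hx * b = b := by
  cases b with
  | zero => rfl
  | elem e =>
    show Adj0.elem (TTb.mul ⟨0, Or.inl rfl⟩ e) = Adj0.elem e
    first | (unfold TTb.mul; rw [dif_pos rfl]) | simp [TTb.mul]

/-- The subsemigroup `S` of `M_2(𝕋_{[1,z]})` of matrices of the form `[[0,a],[-∞,b]]`. -/
noncomputable def UpperS (z : ℝ) (hz : (0:ℝ) ≤ 1) : Type :=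
  {A : MatSR (TT 1 z hz) 2 // A 0 0 = ttId 1 z hz ∧ A 1 0 = Adj0.zero}

/-- The subsemigroup `S'` of `M_2(𝕋_{[1,z]})` of matrices of the form `[[0,-∞],[a,b]]`. -/
noncomputable def LowerS (z : ℝ) (hz : (0:ℝ) ≤ 1) : Type :=
  {A : MatSR (TT 1 z hz) 2 // A 0 0 = ttId 1 z hz ∧ A 0 1 = Adj0.zero}

noncomputable instance {z : ℝ} {hz : (0:ℝ) ≤ 1} : Mul (UpperS z hz) :=
  ⟨fun A B => ⟨A.1 * B.1, by
    obtain ⟨hA1, hA2⟩ := A.2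
    obtain ⟨hB1, hB2⟩ := B.2
    constructor
    · show A.1 0 0 * B.1 0 0 + A.1 0 1 * B.1 1 0 = ttId 1 z hz
      rw [hA1, hB1, hB2, ttId_mul, Adj0.mul_zero, Adj0.add_zero]
    · show A.1 1 0 * B.1 0 0 + A.1 1 1 * B.1 1 0 = Adj0.zero
      rw [hA2, hB2, Adj0.zero_mul, Adj0.mul_zero, Adj0.add_zero]⟩⟩

noncomputable instance {z : ℝ} {hz : (0:ℝ) ≤ 1} : Mul (LowerS z hz) :=
  ⟨fun A B => ⟨A.1 * B.1, by
    obtain ⟨hA1, hA2⟩ := A.2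
    obtain ⟨hB1, hB2⟩ := B.2
    constructor
    · show A.1 0 0 * B.1 0 0 + A.1 0 1 * B.1 1 0 = ttId 1 z hz
      rw [hA1, hB1, hA2, ttId_mul, Adj0.zero_mul, Adj0.add_zero]
    · show A.1 0 0 * B.1 0 1 + A.1 0 1 * B.1 1 1 = Adj0.zero
      rw [hA1, hB2, hA2, ttId_mul, Adj0.zero_mul, Adj0.add_zero]⟩⟩


/-! ### Auxiliary development for Statement 17. -/

section Stmt17

variable {z : ℝ}

namespace Stmt17

abbrev TB (z : ℝ) : Type := TTb 1 z zero_le_one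
abbrev T (z : ℝ) : Type := TT 1 z zero_le_one

lemma TB.val_nonneg (a : TB z) : 0 ≤ a.1 := by
  rcases a.2 with h | h
  · simp [h]
  · linarith [h.1]

lemma TB.val_le (hz : 2 < z) (a : TB z) : a.1 ≤ z := by
  rcases a.2 with h | h
  · rw [h]; linarith
  · exact h.2

lemma TB.val_cases (a : TB z) : a.1 = 0 ∨ 1 ≤ a.1 := by
  rcases a.2 with h | h
  · exact Or.inl h
  · exact Or.inr h.1

lemma TB.ext {a b : TB z} (h : a.1 = b.1) : a = b := Subtype.ext h

lemma TB.add_val (a b : TB z) : (a + b).1 = max a.1 b.1 := rfl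

lemma TB.mul_val (hz : 2 < z) (a b : TB z) : (a * b).1 = min (a.1 + b.1) z := by
  show (TTb.mul a b).1 = _
  rw [TTb.mul]
  split_ifs with h1 h2
  · have := TB.val_le hz b
    rw [h1]; simp; linarith
  · have := TB.val_le hz a
    erw [dif_pos h2]; rw [h2]; simp; linarith
  · erw [dif_neg h2]

end Stmt17

open Stmt17 in
example (hz : 2 < z) (a b c : TB z) : (a*b)*c = a*(b*c) := by
  apply TB.ext
  have h1 := TB.val_le hz a; have h2 := TB.val_le hz b; have h3 := TB.val_le hz c
  have n1 := TB.val_nonneg a; have n2 := TB.val_nonneg b; have n3 := TB.val_nonneg c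
  simp only [TB.mul_val hz]
  rcases le_total (a.1 + b.1) z with h | h <;> rcases le_total (b.1 + c.1) z with h' | h' <;>
    simp [min_def] <;> split_ifs <;> linarith

end Stmt17

namespace Stmt17

lemma tadd_comm (a b : T z) : a + b = b + a := by
  cases a <;> cases b <;> simp
  exact TB.ext (max_comm _ _)

lemma tadd_assoc (a b c : T z) : a + b + c = a + (b + c) := by
  cases a <;> cases b <;> cases c <;> simp
  exact TB.ext (max_assoc _ _ _)

lemma tmul_comm (hz : 2 < z) (a b : T z) : a * b = b * a := by
  cases a <;> cases b <;> simp
  apply TB.ext; simp only [TB.mul_val hz]; rw [add_comm]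

lemma tmul_assoc (hz : 2 < z) (a b c : T z) : a * b * c = a * (b * c) := by
  cases a <;> cases b <;> cases c <;> simp
  apply TB.ext
  rename_i x y w
  have h1 := TB.val_le hz x; have h2 := TB.val_le hz y; have h3 := TB.val_le hz w
  have n1 := TB.val_nonneg x; have n2 := TB.val_nonneg y; have n3 := TB.val_nonneg w
  simp only [TB.mul_val hz]
  rcases le_total (x.1 + y.1) z with h | h <;> rcases le_total (y.1 + w.1) z with h' | h' <;>
    simp [min_def] <;> split_ifs <;> linarith

lemma tdistrib (hz : 2 < z) (a b c : T z) : (a + b) * c = a * c + b * c := by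
  cases a <;> cases b <;> cases c <;> simp
  apply TB.ext
  rename_i x y w
  simp only [TB.mul_val hz, TB.add_val]
  rcases le_total x.1 y.1 with h | h
  · rw [max_eq_right h, max_eq_right (min_le_min (by linarith) le_rfl)]
  · rw [max_eq_left h, max_eq_left (min_le_min (by linarith) le_rfl)]

lemma tmul_ttId (a : T z) : a * ttId 1 z zero_le_one = a := by
  cases a with
  | zero => rfl
  | elem e =>
    show Adj0.elem (TTb.mul e ⟨0, Or.inl rfl⟩) = Adj0.elem e
    by_cases h1 : e.1 = 0
    · unfold TTb.mul; erw [dif_pos h1]; congr 1; exact TB.ext h1.symm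
    · unfold TTb.mul; erw [dif_neg h1, dif_pos rfl]

/-- The top element `z` of the truncated semiring. -/
def top (hz : 2 < z) : T z := Adj0.elem ⟨z, Or.inr ⟨by linarith, le_refl z⟩⟩

lemma tmul_top (hz : 2 < z) (a : T z) (ha : a ≠ Adj0.zero) : a * top hz = top hz := by
  cases a with
  | zero => exact absurd rfl ha
  | elem e =>
    show Adj0.elem (e * _) = _
    unfold top
    congr 1
    apply TB.ext
    erw [TB.mul_val hz]
    have := TB.val_nonneg e
    simp; linarith

end Stmt17

namespace Stmt17

/-- Pairs `(a, b)` encoding matrices `[[0,a],[-∞,b]]`. -/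
def Pz (z : ℝ) : Type := T z × T z

noncomputable instance : Mul (Pz z) := ⟨fun x y => (y.1 + x.1 * y.2, x.2 * y.2)⟩

lemma pmul_def (x y : Pz z) : x * y = (y.1 + x.1 * y.2, x.2 * y.2) := rfl

/-- Product of the second coordinates. -/
noncomputable def Bl : List (Pz z) → T z
  | [] => ttId 1 z zero_le_one
  | x :: t => x.2 * Bl t

/-- The top-right entry of the matrix product. -/
noncomputable def Tl : List (Pz z) → T z
  | [] => Adj0.zero
  | x :: t => x.1 * Bl t + Tl t

lemma Bl_append (hz : 2 < z) (l1 l2 : List (Pz z)) : Bl (l1 ++ l2) = Bl l1 * Bl l2 := by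
  induction l1 with
  | nil => simp [Bl, ttId_mul]
  | cons x t ih => simp only [List.cons_append, List.append_eq, Bl, ih, tmul_assoc hz]

lemma Tl_append (hz : 2 < z) (l1 l2 : List (Pz z)) :
    Tl (l1 ++ l2) = Tl l1 * Bl l2 + Tl l2 := by
  induction l1 with
  | nil => simp [Tl]
  | cons x t ih =>
    simp only [List.cons_append, List.append_eq, Tl, ih, Bl_append hz, tdistrib hz,
      tmul_assoc hz, tadd_assoc]

lemma foldl_mul_eq (hz : 2 < z) :
    ∀ (t : List (Pz z)) (x : Pz z), t.foldl (· * ·) x = (Tl (x :: t), Bl (x :: t)) := by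
  intro t
  induction t with
  | nil =>
    intro x
    show x = _
    simp [Tl, Bl, tmul_ttId]
    rfl
  | cons p t ih =>
    intro x
    show t.foldl (· * ·) (x * p) = _
    rw [ih (x * p)]
    have h1 : Tl (x * p :: t) = Tl (x :: p :: t) := by
      simp only [Tl, Bl, pmul_def]
      rw [tdistrib hz, tmul_assoc hz, ← tadd_assoc, tadd_comm (p.1 * Bl t)]
    have h2 : Bl (x * p :: t) = Bl (x :: p :: t) := by
      simp only [Bl, pmul_def, tmul_assoc hz]
    rw [h1, h2]

lemma foldl_optStep_some {β : Type*} [Mul β] (l : List β) (x : β) :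
    l.foldl (optStep (· * ·)) (some x) = some (l.foldl (· * ·) x) := by
  induction l generalizing x with
  | nil => rfl
  | cons a t ih => simp only [List.foldl_cons, optStep, Option.elim, ih]

lemma finProd_eq (hz : 2 < z) {k : ℕ} (s : Fin (k + 1) → Pz z) :
    finProd s = some (Tl (List.ofFn s), Bl (List.ofFn s)) := by
  rw [finProd, List.ofFn_succ, List.foldl_cons]
  show (List.ofFn fun i => s i.succ).foldl (optStep (· * ·)) (some (s 0)) = _
  rw [foldl_optStep_some, foldl_mul_eq hz, ← List.ofFn_succ]
  rfl

/-- Core reduction: to swap two adjacent-in-list factors it suffices to check the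
tail equalities. -/
lemma swap_core (hz : 2 < z) (x y : Pz z) (l3 : List (Pz z))
    (hB : Bl (x :: y :: l3) = Bl (y :: x :: l3))
    (hT : Tl (x :: y :: l3) = Tl (y :: x :: l3)) (l1 : List (Pz z)) :
    Tl (l1 ++ x :: y :: l3) = Tl (l1 ++ y :: x :: l3) ∧
    Bl (l1 ++ x :: y :: l3) = Bl (l1 ++ y :: x :: l3) := by
  rw [Bl_append hz, Bl_append hz, Tl_append hz, Tl_append hz, hB, hT]
  exact ⟨rfl, rfl⟩

lemma swap_caseB (x y : Pz z) (l3 : List (Pz z)) (h : Bl l3 = Adj0.zero) :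
    Bl (x :: y :: l3) = Bl (y :: x :: l3) ∧ Tl (x :: y :: l3) = Tl (y :: x :: l3) := by
  constructor
  · simp [Bl, h]
  · simp [Tl, Bl, h]

lemma swap_caseC (hz : 2 < z) (x y : Pz z) (l3 : List (Pz z))
    (hx : x.2 ≠ Adj0.zero) (hy : y.2 ≠ Adj0.zero) (h : Bl l3 = top hz) :
    Bl (x :: y :: l3) = Bl (y :: x :: l3) ∧ Tl (x :: y :: l3) = Tl (y :: x :: l3) := by
  constructor
  · simp only [Bl, h, tmul_top hz _ hy, tmul_top hz _ hx]
  · simp only [Tl, Bl, h, tmul_top hz _ hy, tmul_top hz _ hx]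
    rw [← tadd_assoc, tadd_comm (x.1 * top hz), tadd_assoc]

lemma swap_caseD (x y : Pz z) (l3 : List (Pz z))
    (hx : x.2 = ttId 1 z zero_le_one) (hy : y.2 = ttId 1 z zero_le_one) :
    Bl (x :: y :: l3) = Bl (y :: x :: l3) ∧ Tl (x :: y :: l3) = Tl (y :: x :: l3) := by
  constructor
  · simp only [Bl, hx, hy, ttId_mul]
  · simp only [Tl, Bl, hx, hy, ttId_mul]
    rw [← tadd_assoc, tadd_comm (x.1 * Bl l3), tadd_assoc]

end Stmt17

namespace Stmt17

lemma ofFn_decomp {α : Type*} {n : ℕ} (s t : Fin n → α) (p : ℕ) (hp : p + 1 < n)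
    (h : ∀ i (hi : i < n), i ≠ p → i ≠ p + 1 → t ⟨i, hi⟩ = s ⟨i, hi⟩) :
    List.ofFn t = (List.ofFn s).take p ++ t ⟨p, by omega⟩ :: t ⟨p + 1, hp⟩ ::
      (List.ofFn s).drop (p + 2) := by
  have d1 : (List.ofFn t).drop p = t ⟨p, by omega⟩ :: t ⟨p + 1, hp⟩ ::
      (List.ofFn t).drop (p + 2) := by
    rw [List.drop_eq_getElem_cons (by simp; omega)]
    rw [List.drop_eq_getElem_cons (by simp; omega)]
    rw [List.getElem_ofFn, List.getElem_ofFn]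
  have d2 : (List.ofFn t).drop (p + 2) = (List.ofFn s).drop (p + 2) := by
    apply List.ext_getElem
    · simp
    · intro i h1 h2
      rw [List.getElem_drop, List.getElem_drop, List.getElem_ofFn, List.getElem_ofFn]
      apply h <;> omega
  have d3 : (List.ofFn t).take p = (List.ofFn s).take p := by
    apply List.ext_getElem
    · simp
    · intro i h1 h2
      have hi : i < p := by simp [List.length_take] at h1; omega
      rw [List.getElem_take, List.getElem_take, List.getElem_ofFn, List.getElem_ofFn]
      apply h <;> omega
  conv_lhs => rw [← List.take_append_drop p (List.ofFn t), d1, d2, d3]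

lemma drop_ofFn {α : Type*} {n : ℕ} (s : Fin n → α) (m : ℕ) (hm : m ≤ n) :
    (List.ofFn s).drop m = List.ofFn (fun i : Fin (n - m) => s ⟨m + i.1, by omega⟩) := by
  apply List.ext_getElem
  · simp [List.length_drop]
  · intro i h1 h2
    rw [List.getElem_drop, List.getElem_ofFn, List.getElem_ofFn]

lemma Bl_zero_of_mem {l : List (Pz z)} {x : Pz z} (hx : x ∈ l) (h : x.2 = Adj0.zero) :
    Bl l = Adj0.zero := by
  induction l with
  | nil => simp at hx
  | cons a t ih =>
    rcases List.mem_cons.mp hx with rfl | hmem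
    · simp [Bl, h]
    · simp [Bl, ih hmem]

/-- Real value of an element of `𝕋` (`-∞` mapped to `0`). -/
noncomputable def bval : T z → ℝ := fun t => match t with
  | Adj0.zero => 0
  | Adj0.elem d => d.1

lemma bval_nonneg (t : T z) : 0 ≤ bval t := by
  cases t with
  | zero => exact le_refl 0
  | elem d => exact TB.val_nonneg d

lemma bval_big {t : T z} (h0 : t ≠ Adj0.zero) (h1 : t ≠ ttId 1 z zero_le_one) :
    1 ≤ bval t := by
  cases t with
  | zero => exact absurd rfl h0
  | elem d =>
    show 1 ≤ d.1
    rcases TB.val_cases d with h | h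
    · exfalso
      apply h1
      show Adj0.elem d = Adj0.elem _
      congr 1
      exact TB.ext h
    · exact h

lemma Bl_val (hz : 2 < z) : ∀ l : List (Pz z), (∀ x ∈ l, x.2 ≠ Adj0.zero) →
    ∃ c : TB z, Bl l = Adj0.elem c ∧
      c.1 = min ((l.map (fun x => bval x.2)).sum) z := by
  intro l
  induction l with
  | nil =>
    intro _
    refine ⟨⟨0, Or.inl rfl⟩, rfl, ?_⟩
    simp
    linarith
  | cons x t ih =>
    intro hl
    obtain ⟨c, hc, hcv⟩ := ih (fun y hy => hl y (List.mem_cons_of_mem _ hy))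
    have hx := hl x List.mem_cons_self
    cases hd : x.2 with
    | zero => exact absurd hd hx
    | elem d =>
      refine ⟨d * c, ?_, ?_⟩
      · show x.2 * Bl t = _
        rw [hd, hc, Adj0.elem_mul_elem]
      · rw [TB.mul_val hz, hcv]
        have hd0 : 0 ≤ d.1 := TB.val_nonneg d
        have : bval x.2 = d.1 := by rw [hd]; rfl
        rw [List.map_cons, List.sum_cons, this]
        rcases le_total ((t.map (fun x => bval x.2)).sum) z with h | h
        · rw [min_eq_left h]
        · rw [min_eq_right h]
          rw [min_eq_right (by linarith), min_eq_right (by linarith)]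

lemma Bl_top (hz : 2 < z) (l : List (Pz z)) (h0 : ∀ x ∈ l, x.2 ≠ Adj0.zero)
    (hs : z ≤ (l.map (fun x => bval x.2)).sum) : Bl l = top hz := by
  obtain ⟨c, hc, hcv⟩ := Bl_val hz l h0
  rw [hc]
  unfold top
  congr 1
  apply TB.ext
  rw [hcv, min_eq_right hs]

lemma pair_sum (W : ℕ → ℝ) (hW : ∀ j, 0 ≤ W j) (N : ℕ)
    (hpair : ∀ i, i < N → 1 ≤ W (2 * i) + W (2 * i + 1)) :
    (N : ℝ) ≤ ∑ j ∈ Finset.range (2 * N), W j := by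
  induction N with
  | zero => simp
  | succ n ih =>
    have h1 : 2 * (n + 1) = 2 * n + 1 + 1 := by omega
    rw [h1, Finset.sum_range_succ, Finset.sum_range_succ]
    have := ih (fun i hi => hpair i (by omega))
    have := hpair n (by omega)
    push_cast
    linarith

end Stmt17

namespace Stmt17

lemma finProd_eq' (hz : 2 < z) {k : ℕ} (hk : 0 < k) (s : Fin k → Pz z) :
    finProd s = some (Tl (List.ofFn s), Bl (List.ofFn s)) := by
  cases k with
  | zero => omega
  | succ m => exact finProd_eq hz s

lemma swap_adj (hz : 2 < z) {k : ℕ} (s : Fin k → Pz z) (p : ℕ) (hp : p + 1 < k)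
    (key : Bl (s ⟨p, by omega⟩ :: s ⟨p + 1, hp⟩ :: (List.ofFn s).drop (p + 2)) =
           Bl (s ⟨p + 1, hp⟩ :: s ⟨p, by omega⟩ :: (List.ofFn s).drop (p + 2)) ∧
           Tl (s ⟨p, by omega⟩ :: s ⟨p + 1, hp⟩ :: (List.ofFn s).drop (p + 2)) =
           Tl (s ⟨p + 1, hp⟩ :: s ⟨p, by omega⟩ :: (List.ofFn s).drop (p + 2))) :
    ∃ σ : Equiv.Perm (Fin k), σ ≠ Equiv.refl (Fin k) ∧
      finProd (fun i => s (σ i)) = finProd s := by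
  have hpk : p < k := by omega
  set a : Fin k := ⟨p, hpk⟩
  set b : Fin k := ⟨p + 1, hp⟩
  have hab : a ≠ b := by simp [a, b, Fin.ext_iff]
  refine ⟨Equiv.swap a b, ?_, ?_⟩
  · intro hcon
    have : Equiv.swap a b a = a := by rw [hcon]; rfl
    rw [Equiv.swap_apply_left] at this
    exact hab this.symm
  · have h1 : List.ofFn (fun i => s (Equiv.swap a b i)) =
        (List.ofFn s).take p ++ s b :: s a :: (List.ofFn s).drop (p + 2) := by
      have hdec := ofFn_decomp s (fun i => s (Equiv.swap a b i)) p hp (by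
        intro i hi hi1 hi2
        show s (Equiv.swap a b ⟨i, hi⟩) = s ⟨i, hi⟩
        have : Equiv.swap a b ⟨i, hi⟩ = ⟨i, hi⟩ := by
          apply Equiv.swap_apply_of_ne_of_ne <;> simp [a, b, Fin.ext_iff] <;> omega
        rw [this])
      rw [hdec]
      have ea : s (Equiv.swap a b ⟨p, by omega⟩) = s b := by
        have : (⟨p, by omega⟩ : Fin k) = a := rfl
        rw [this, Equiv.swap_apply_left]
      have eb : s (Equiv.swap a b ⟨p + 1, hp⟩) = s a := by
        have : (⟨p + 1, hp⟩ : Fin k) = b := rfl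
        rw [this, Equiv.swap_apply_right]
      simp only [ea, eb]
    have h2 : List.ofFn s =
        (List.ofFn s).take p ++ s a :: s b :: (List.ofFn s).drop (p + 2) := by
      exact ofFn_decomp s s p hp (fun _ _ _ _ => rfl)
    rw [finProd_eq' hz (by omega), finProd_eq' hz (by omega), h1]
    conv_rhs => rw [h2]
    obtain ⟨hT, hB⟩ := swap_core hz (s a) (s b) ((List.ofFn s).drop (p + 2))
      key.1 key.2 ((List.ofFn s).take p)
    rw [hT, hB]

lemma kperm_aux (hz : 2 < z) (N k : ℕ) (hN3 : 3 ≤ N) (hNz : z ≤ (N : ℝ))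
    (hkeq : k = 2 * N + 5) : KPermutable (Pz z) k := by
  intro s
  have hk11 : 11 ≤ k := by omega
  by_cases hB : ∃ j : Fin k, 2 ≤ (j : ℕ) ∧ (s j).2 = Adj0.zero
  · -- some b_j = -∞ with j ≥ 2 : swap positions 0 and 1
    obtain ⟨j, hj2, hjz⟩ := hB
    apply swap_adj hz s 0 (by omega)
    apply swap_caseB
    have hdrop := drop_ofFn s 2 (by omega)
    rw [hdrop]
    apply Bl_zero_of_mem (x := s j)
    · refine List.mem_ofFn.mpr ⟨⟨(j : ℕ) - 2, by omega⟩, ?_⟩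
      show s ⟨2 + ((j : ℕ) - 2), by omega⟩ = s j
      congr 1
      exact Fin.ext (by simp; omega)
    · exact hjz
  · push_neg at hB
    have hB' : ∀ (j : ℕ) (hj : j < k), 2 ≤ j → (s ⟨j, hj⟩).2 ≠ Adj0.zero :=
      fun j hj h2 => hB ⟨j, hj⟩ h2
    by_cases hD : ∃ (p : ℕ) (hp : p + 1 < k),
        (s ⟨p, by omega⟩).2 = ttId 1 z zero_le_one ∧
        (s ⟨p + 1, hp⟩).2 = ttId 1 z zero_le_one
    · obtain ⟨p, hp, hx, hy⟩ := hD
      apply swap_adj hz s p hp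
      exact swap_caseD (s ⟨p, by omega⟩) (s ⟨p + 1, hp⟩) _ hx hy
    · push_neg at hD
      apply swap_adj hz s 2 (by omega)
      apply swap_caseC hz
      · exact hB' 2 (by omega) (by omega)
      · exact hB' 3 (by omega) (by omega)
      · -- the product of the b's from position 4 on is the top element z
        rw [drop_ofFn s 4 (by omega)]
        apply Bl_top hz
        · intro x hx
          rw [List.mem_ofFn] at hx
          obtain ⟨i, rfl⟩ := hx
          exact hB' (4 + (i : ℕ)) (by omega) (by omega)
        · -- sum of values ≥ N ≥ z
          set W : ℕ → ℝ := fun j => if h : 4 + j < k then bval ((s ⟨4 + j, h⟩).2) else 0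
            with hWdef
          have hWeq : ∀ (j : ℕ) (h : 4 + j < k), W j = bval ((s ⟨4 + j, h⟩).2) := by
            intro j h
            show (if h' : 4 + j < k then bval ((s ⟨4 + j, h'⟩).2) else 0) = _
            rw [dif_pos h]
          have hW0 : ∀ (j : ℕ), ¬ (4 + j < k) → W j = 0 := by
            intro j h
            show (if h' : 4 + j < k then bval ((s ⟨4 + j, h'⟩).2) else 0) = 0
            rw [dif_neg h]
          have hsum : ((List.ofFn (fun i : Fin (k - 4) =>
              s ⟨4 + (i : ℕ), by omega⟩)).map (fun x => bval x.2)).sum =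
              ∑ j ∈ Finset.range (k - 4), W j := by
            rw [List.map_ofFn, List.sum_ofFn, ← Fin.sum_univ_eq_sum_range W (k - 4)]
            apply Finset.sum_congr rfl
            intro i _
            rw [hWeq (i : ℕ) (by omega)]
            rfl
          rw [hsum]
          have hWnn : ∀ j, 0 ≤ W j := by
            intro j
            by_cases h : 4 + j < k
            · rw [hWeq j h]; exact bval_nonneg _
            · rw [hW0 j h]
          have hpair : ∀ i, i < N → 1 ≤ W (2 * i) + W (2 * i + 1) := by
            intro i hiN
            have hplt : (4 + 2 * i) + 1 < k := by omega
            have := hD (4 + 2 * i) hplt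
            have h1 : W (2 * i) = bval ((s ⟨4 + 2 * i, by omega⟩).2) :=
              hWeq (2 * i) (by omega)
            have h2 : W (2 * i + 1) = bval ((s ⟨4 + 2 * i + 1, by omega⟩).2) := by
              rw [hWeq (2 * i + 1) (by omega)]
              rfl
            by_cases hcase : (s ⟨4 + 2 * i, by omega⟩).2 = ttId 1 z zero_le_one
            · have hne : (s ⟨4 + 2 * i + 1, hplt⟩).2 ≠ ttId 1 z zero_le_one := by
                intro hcon
                exact this hcase hcon
              have := bval_big (hB' (4 + 2 * i + 1) (by omega) (by omega)) hne
              have := hWnn (2 * i)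
              rw [h1, h2]
              linarith [hWnn (2 * i)]
            · have := bval_big (hB' (4 + 2 * i) (by omega) (by omega)) hcase
              have h2nn : (0:ℝ) ≤ W (2 * i + 1) := hWnn _
              rw [h1, h2]
              linarith
          have hps := pair_sum W hWnn N hpair
          have hsub : (Finset.range (2 * N)) ⊆ Finset.range (k - 4) := by
            apply Finset.range_subset_range.mpr
            omega
          have := Finset.sum_le_sum_of_subset_of_nonneg hsub
            (fun j _ _ => hWnn j)
          calc z ≤ (N : ℝ) := hNz
            _ ≤ ∑ j ∈ Finset.range (2 * N), W j := hps
            _ ≤ ∑ j ∈ Finset.range (k - 4), W j := this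

lemma kperm_Pz (hz : 2 < z) : KPermutable (Pz z) (2 * ⌈z⌉ + 5).toNat := by
  have hc3 : 3 ≤ ⌈z⌉ := by
    have h1 : (2 : ℝ) < (⌈z⌉ : ℝ) := lt_of_lt_of_le hz (Int.le_ceil z)
    exact_mod_cast h1
  have hNc : ((⌈z⌉.toNat : ℤ)) = ⌈z⌉ := Int.toNat_of_nonneg (by omega)
  apply kperm_aux hz ⌈z⌉.toNat
  · omega
  · have := Int.le_ceil z
    rw [← hNc] at this
    exact_mod_cast this
  · omega

end Stmt17

namespace Stmt17

lemma ofFn_rev {α : Type*} {n : ℕ} (u : Fin n → α) :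
    List.ofFn (fun i => u (Fin.rev i)) = (List.ofFn u).reverse := by
  apply List.ext_getElem
  · simp
  · intro i h1 h2
    rw [List.getElem_ofFn, List.getElem_reverse, List.getElem_ofFn]
    congr 1
    apply Fin.ext
    rw [Fin.val_rev]
    simp only [List.length_ofFn]
    simp only [List.length_ofFn] at h1
    omega

lemma foldl_map_hom {α β : Type*} [Mul α] [Mul β] (f : α → β)
    (hf : ∀ x y, f (x * y) = f x * f y) :
    ∀ (l : List α) (x : α), (l.map f).foldl (· * ·) (f x) = f (l.foldl (· * ·) x) := by
  intro l
  induction l with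
  | nil => intro x; rfl
  | cons a t ih =>
    intro x
    show (t.map f).foldl (· * ·) (f x * f a) = f (t.foldl (· * ·) (x * a))
    rw [← hf, ih]

lemma map_finProd {α β : Type*} [Mul α] [Mul β] (f : α → β)
    (hf : ∀ x y, f (x * y) = f x * f y) {k : ℕ} (u : Fin k → α) :
    finProd (fun i => f (u i)) = Option.map f (finProd u) := by
  cases k with
  | zero => rfl
  | succ m =>
    have h1 : List.ofFn (fun i => f (u i.succ)) = (List.ofFn fun i => u i.succ).map f := by
      rw [List.map_ofFn]; rfl
    have e1 : finProd (fun i => f (u i)) =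
        some (((List.ofFn fun i => u i.succ).map f).foldl (· * ·) (f (u 0))) := by
      rw [finProd, List.ofFn_succ, List.foldl_cons]
      show List.foldl _ (some (f (u 0))) _ = _
      rw [h1, foldl_optStep_some]
    have e2 : finProd u = some ((List.ofFn fun i => u i.succ).foldl (· * ·) (u 0)) := by
      rw [finProd, List.ofFn_succ, List.foldl_cons]
      show List.foldl _ (some (u 0)) _ = _
      rw [foldl_optStep_some]
    rw [e1, e2, foldl_map_hom f hf]
    rfl

lemma kperm_of_hom {α β : Type*} [Mul α] [Mul β] (f : α → β)
    (hf : ∀ x y, f (x * y) = f x * f y) (hinj : Function.Injective f) {k : ℕ}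
    (h : KPermutable β k) : KPermutable α k := by
  intro s
  obtain ⟨σ, hσ, heq⟩ := h (fun i => f (s i))
  refine ⟨σ, hσ, ?_⟩
  apply Option.map_injective hinj
  rw [← map_finProd f hf, ← map_finProd f hf]
  exact heq

lemma foldl_antihom {α β : Type*} [Mul α] [Mul β] (f : α → β)
    (hf : ∀ x y, f (x * y) = f y * f x)
    (hassoc : ∀ a b c : β, a * b * c = a * (b * c)) :
    ∀ (l : List α) (x : α),
      ((l.map f).reverse ++ [f x]).foldl (optStep (· * ·)) none =
        some (f (l.foldl (· * ·) x)) := by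
  intro l
  induction l with
  | nil => intro x; rfl
  | cons a t ih =>
    intro x
    rw [List.map_cons, List.reverse_cons, List.foldl_cons]
    rw [← ih (x * a), List.foldl_append, List.foldl_append, List.foldl_append]
    cases hacc : ((t.map f).reverse).foldl (optStep (· * ·)) none with
    | none => simp [optStep, hf]
    | some w => simp [optStep, hf, hassoc]

lemma map_finProd_rev {α β : Type*} [Mul α] [Mul β] (f : α → β)
    (hf : ∀ x y, f (x * y) = f y * f x)
    (hassoc : ∀ a b c : β, a * b * c = a * (b * c)) {k : ℕ} (u : Fin k → α) :
    finProd (fun i => f (u (Fin.rev i))) = Option.map f (finProd u) := by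
  cases k with
  | zero => rfl
  | succ m =>
    have h1 : List.ofFn (fun i : Fin (m + 1) => f (u (Fin.rev i))) =
        ((List.ofFn u).map f).reverse := by
      rw [List.map_ofFn]
      exact ofFn_rev (fun i => f (u i))
    rw [finProd, h1]
    rw [List.ofFn_succ (f := u), List.map_cons, List.reverse_cons]
    rw [foldl_antihom f hf hassoc]
    rw [finProd, List.ofFn_succ (f := u), List.foldl_cons]
    show _ = Option.map f ((List.ofFn fun i => u i.succ).foldl (optStep (· * ·))
      (some (u 0)))
    rw [foldl_optStep_some]
    rfl

lemma kperm_of_antihom {α β : Type*} [Mul α] [Mul β] (f : α → β)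
    (hf : ∀ x y, f (x * y) = f y * f x)
    (hassoc : ∀ a b c : β, a * b * c = a * (b * c))
    (hinj : Function.Injective f) {k : ℕ}
    (h : KPermutable β k) : KPermutable α k := by
  intro s
  obtain ⟨σ, hσ, heq⟩ := h (fun i => f (s (Fin.rev i)))
  refine ⟨Fin.revPerm.trans (σ.trans Fin.revPerm), ?_, ?_⟩
  · intro hcon
    apply hσ
    apply Equiv.ext
    intro j
    have h1 := Equiv.ext_iff.mp hcon (Fin.rev j)
    simp only [Equiv.trans_apply, Fin.revPerm_apply, Fin.rev_rev, Equiv.refl_apply] at h1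
    have h2 := congrArg Fin.rev h1
    rw [Fin.rev_rev, Fin.rev_rev] at h2
    simpa using h2
  · apply Option.map_injective hinj
    rw [← map_finProd_rev f hf hassoc, ← map_finProd_rev f hf hassoc]
    have hfun : (fun i => f (s ((Fin.revPerm.trans (σ.trans Fin.revPerm)) (Fin.rev i)))) =
        (fun i => f (s (Fin.rev (σ i)))) := by
      funext i
      congr 2
      simp [Equiv.trans_apply, Fin.revPerm_apply, Fin.rev_rev]
    rw [hfun]
    exact heq

lemma pmul_assoc (hz : 2 < z) (a b c : Pz z) : a * b * c = a * (b * c) := by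
  have h1 : (a * b * c).1 = (a * (b * c)).1 := by
    show c.1 + (b.1 + a.1 * b.2) * c.2 = c.1 + b.1 * c.2 + a.1 * (b.2 * c.2)
    rw [tdistrib hz, tmul_assoc hz, ← tadd_assoc]
  have h2 : (a * b * c).2 = (a * (b * c)).2 := by
    show (a.2 * b.2) * c.2 = a.2 * (b.2 * c.2)
    exact tmul_assoc hz _ _ _
  exact Prod.ext_iff.mpr ⟨h1, h2⟩

end Stmt17

namespace Stmt17

noncomputable def fU : UpperS z zero_le_one → Pz z := fun A => (A.1 0 1, A.1 1 1)

noncomputable def fL : LowerS z zero_le_one → Pz z := fun A => (A.1 1 0, A.1 1 1)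

lemma fU_hom (A B : UpperS z zero_le_one) : fU (A * B) = fU A * fU B := by
  obtain ⟨hA1, hA2⟩ := A.2
  obtain ⟨hB1, hB2⟩ := B.2
  show (A.1 0 0 * B.1 0 1 + A.1 0 1 * B.1 1 1, A.1 1 0 * B.1 0 1 + A.1 1 1 * B.1 1 1) = _
  rw [hA1, hA2, ttId_mul, Adj0.zero_mul, Adj0.zero_add]
  rfl

lemma fU_inj : Function.Injective (fU (z := z)) := by
  intro A B h
  have h1 : A.1 0 1 = B.1 0 1 := congrArg Prod.fst h
  have h2 : A.1 1 1 = B.1 1 1 := congrArg Prod.snd h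
  apply Subtype.ext
  funext i j
  fin_cases i <;> fin_cases j
  · exact A.2.1.trans B.2.1.symm
  · exact h1
  · exact A.2.2.trans B.2.2.symm
  · exact h2

lemma fL_antihom (hz : 2 < z) (A B : LowerS z zero_le_one) : fL (A * B) = fL B * fL A := by
  obtain ⟨hA1, hA2⟩ := A.2
  obtain ⟨hB1, hB2⟩ := B.2
  show (A.1 1 0 * B.1 0 0 + A.1 1 1 * B.1 1 0, A.1 1 0 * B.1 0 1 + A.1 1 1 * B.1 1 1) = _
  rw [hB1, hB2, tmul_ttId, Adj0.mul_zero, Adj0.zero_add,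
    tmul_comm hz (A.1 1 1) (B.1 1 0), tmul_comm hz (A.1 1 1) (B.1 1 1)]
  rfl

lemma fL_inj : Function.Injective (fL (z := z)) := by
  intro A B h
  have h1 : A.1 1 0 = B.1 1 0 := congrArg Prod.fst h
  have h2 : A.1 1 1 = B.1 1 1 := congrArg Prod.snd h
  apply Subtype.ext
  funext i j
  fin_cases i <;> fin_cases j
  · exact A.2.1.trans B.2.1.symm
  · exact A.2.2.trans B.2.2.symm
  · exact h1
  · exact h2

end Stmt17

/-- for real `z > 2`, the subsemigroups `S` and `S'` of
`M_2(𝕋_{[1,z]})` consisting of matrices of the form `[[0,a],[-∞,b]]`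
(resp. `[[0,-∞],[a,b]]`) are `(2⌈z⌉+5)`-permutable. -/
theorem stmt_17 (z : ℝ) (hz : 2 < z) :
    KPermutable (UpperS z zero_le_one) (2 * ⌈z⌉ + 5).toNat ∧
    KPermutable (LowerS z zero_le_one) (2 * ⌈z⌉ + 5).toNat := by
  have hP := Stmt17.kperm_Pz hz
  constructor
  · exact Stmt17.kperm_of_hom Stmt17.fU Stmt17.fU_hom Stmt17.fU_inj hP
  · exact Stmt17.kperm_of_antihom Stmt17.fL (Stmt17.fL_antihom hz)
      (Stmt17.pmul_assoc hz) Stmt17.fL_inj hP
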